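/- For a lattice path ν beginning with a north step and ending with an east step, the number of ν-Dyck paths with exactly i valleys equals the number of ν-Dyck paths with exactly i high peaks. -/

import Mathlib

/-- Steps of a (Schröder) lattice path: north, east, diagonal. -/
inductive Step : Type
  | N | E | D
deriving DecidableEq, Repr

/-- Total horizontal displacement of a path. -/
def eLen (p : List Step) : ℕ := p.count Step.E + p.count Step.D

/-- Total vertical displacement of a path. -/
def nLen (p : List Step) : ℕ := p.count Step.N + p.count Step.D

/-- A lattice path uses only `N` and `E` steps. -/
def IsLatticePath (ν : List Step) : Prop := Step.D ∉ ν

/-- `colVal p x` is twice the starting height of the step of `p` crossing the vertical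
strip between abscissas `x` and `x+1`, plus `1` if that step is diagonal.  Comparing these
values columnwise is equivalent to comparing the heights of the paths over each strip. -/
def colVal : List Step → ℕ → ℕ
  | [], _ => 0
  | Step.N :: p, x => colVal p x + 2
  | Step.E :: _, 0 => 0
  | Step.E :: p, x+1 => colVal p x
  | Step.D :: _, 0 => 1
  | Step.D :: p, x+1 => colVal p x + 2

/-- `π` stays weakly above `ρ` (same endpoints intended). -/
def WeaklyAbove (π ρ : List Step) : Prop := ∀ x, colVal ρ x ≤ colVal π x

/-- Replace every peak (consecutive `NE`) of a path by a diagonal step; applied to `ν`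
this gives the path `μ` of the large ν-Schröder path definition. -/
def cutPeaks : List Step → List Step
  | [] => []
  | Step.N :: Step.E :: p => Step.D :: cutPeaks p
  | s :: p => s :: cutPeaks p

/-- A ν-Dyck path: an `N,E` path with the same endpoints as `ν` staying weakly above `ν`. -/
def IsNuDyck (ν π : List Step) : Prop :=
  Step.D ∉ π ∧ eLen π = eLen ν ∧ nLen π = nLen ν ∧ WeaklyAbove π ν

/-- A (small) ν-Schröder path: an `N,E,D` path with the same endpoints as `ν` staying weakly
above `ν` (this automatically forbids diagonal steps on the ν-diagonal). -/
def IsSmallSchroder (ν π : List Step) : Prop :=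
  eLen π = eLen ν ∧ nLen π = nLen ν ∧ WeaklyAbove π ν

/-- A large ν-Schröder path: an `N,E,D` path with the same endpoints as `ν` staying weakly
above the path obtained from `ν` by replacing each peak by a diagonal step. -/
def IsLargeSchroder (ν π : List Step) : Prop :=
  eLen π = eLen ν ∧ nLen π = nLen ν ∧ WeaklyAbove π (cutPeaks ν)

/-- Number of peaks (consecutive `NE` pairs). -/
def peaks (p : List Step) : ℕ := (p.zip p.tail).count (Step.N, Step.E)

/-- Number of valleys (consecutive `EN` pairs). -/
def valleys (p : List Step) : ℕ := (p.zip p.tail).count (Step.E, Step.N)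

/-- Lattice points at which valleys of a path occur (starting the path at `(x,y)`). -/
def valleyPts : List Step → ℕ → ℕ → List (ℕ × ℕ)
  | [], _, _ => []
  | Step.E :: p, x, y =>
      (if p.head? = some Step.N then [(x+1, y)] else []) ++ valleyPts p (x+1) y
  | Step.N :: p, x, y => valleyPts p x (y+1)
  | Step.D :: p, x, y => valleyPts p (x+1) (y+1)

/-- Lattice points at which high peaks (peaks strictly above `ν`) of a path occur. -/
def highPeakPts (ν : List Step) : List Step → ℕ → ℕ → List (ℕ × ℕ)
  | [], _, _ => []
  | Step.N :: p, x, y =>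
      (if p.head? = some Step.E ∧ colVal ν x < 2*(y+1) then [(x, y+1)] else []) ++
        highPeakPts ν p x (y+1)
  | Step.E :: p, x, y => highPeakPts ν p (x+1) y
  | Step.D :: p, x, y => highPeakPts ν p (x+1) (y+1)

/-- Number of high peaks of `π` relative to `ν`. -/
def highPeaks (ν π : List Step) : ℕ := (highPeakPts ν π 0 0).length

/-- j-th ν-Narayana number: number of ν-Dyck paths with exactly `j` valleys. -/
noncomputable def Nar (ν : List Step) (j : ℕ) : ℕ :=
  Nat.card {π : List Step // IsNuDyck ν π ∧ valleys π = j}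

/-- Number of small ν-Schröder paths with exactly `i` diagonal steps. -/
noncomputable def schNum (ν : List Step) (i : ℕ) : ℕ :=
  Nat.card {π : List Step // IsSmallSchroder ν π ∧ π.count Step.D = i}

/-- `lowH ν x` is the lowest height of a point of `ν` at abscissa `x`. -/
def lowH : List Step → ℕ → ℕ
  | _, 0 => 0
  | [], _+1 => 0
  | Step.N :: p, x+1 => lowH p (x+1) + 1
  | Step.E :: p, x+1 => lowH p x
  | Step.D :: p, x+1 => lowH p x + 1

/-- The lowest lattice path from `(0,0)` to `(b,a)` weakly above the line segment
from `(0,0)` to `(b,a)`. -/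
def nuAB (a b : ℕ) : List Step :=
  (List.range b).flatMap (fun x =>
    List.replicate (((x+1)*a + b - 1)/b - (x*a + b - 1)/b) Step.N ++ [Step.E])

/-- Number of large rational `(a,b)`-Schröder paths with `i` diagonal steps. -/
noncomputable def largeCount (a b i : ℕ) : ℕ :=
  Nat.card {π : List Step // IsLargeSchroder (nuAB a b) π ∧ π.count Step.D = i}

/-- Number of small rational `(a,b)`-Schröder paths with `i` diagonal steps. -/
noncomputable def smallCount (a b i : ℕ) : ℕ :=
  Nat.card {π : List Step // IsSmallSchroder (nuAB a b) π ∧ π.count Step.D = i}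

/-- Binomial coefficient with an integer lower entry (zero when negative). -/
def chooseZ (n : ℕ) (k : ℤ) : ℕ := if 0 ≤ k then n.choose k.toNat else 0

/-- The region weakly above `ν` in the rectangle `[0,b] × [0,a]`. -/
def InRegion (ν : List Step) (p : ℕ × ℕ) : Prop :=
  p.1 ≤ eLen ν ∧ p.2 ≤ nLen ν ∧ lowH ν p.1 ≤ p.2

/-- Two points of the region are ν-incompatible if one is strictly southwest of the other and
the rectangle they span lies in the region (equivalently its bottom-right corner does). -/
def Incompat (ν : List Step) (p q : ℕ × ℕ) : Prop :=
  ((p.1 < q.1 ∧ p.2 < q.2) ∨ (q.1 < p.1 ∧ q.2 < p.2)) ∧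
    InRegion ν (max p.1 q.1, min p.2 q.2)

/-- A ν-binary tree: a maximal set of pairwise ν-compatible points of the region. -/
def IsBinaryTree (ν : List Step) (T : Finset (ℕ × ℕ)) : Prop :=
  (∀ p ∈ T, InRegion ν p) ∧ (∀ p ∈ T, ∀ q ∈ T, ¬ Incompat ν p q) ∧
    ∀ r, InRegion ν r → (∀ p ∈ T, ¬ Incompat ν r p) → r ∈ T

/-- A ν-Schröder tree: pairwise ν-compatible points of the region containing the root
`(0,a)` and meeting every row and every column. -/
def IsSchroderTree (ν : List Step) (T : Finset (ℕ × ℕ)) : Prop :=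
  (∀ p ∈ T, InRegion ν p) ∧ (∀ p ∈ T, ∀ q ∈ T, ¬ Incompat ν p q) ∧
    (0, nLen ν) ∈ T ∧ (∀ y ≤ nLen ν, ∃ p ∈ T, p.2 = y) ∧ (∀ x ≤ eLen ν, ∃ p ∈ T, p.1 = x)

/-- One contraction step: delete a node, provided the result is still a ν-Schröder tree. -/
def ContractStep (ν : List Step) (T T' : Finset (ℕ × ℕ)) : Prop :=
  ∃ q ∈ T, T' = T.erase q ∧ IsSchroderTree ν T'

/-- `p` is a leaf of the (plane tree associated to the) node set `T`: no node strictly below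
it in its column and none strictly to its right in its row. -/
def IsLeafIn (T : Finset (ℕ × ℕ)) (p : ℕ × ℕ) : Prop :=
  (∀ q ∈ T, ¬(q.1 = p.1 ∧ q.2 < p.2)) ∧ (∀ q ∈ T, ¬(q.2 = p.2 ∧ p.1 < q.1))

/-- Starting points of vertical runs and ending points of horizontal runs of `ν`. -/
def leafPts (ν : List Step) : Finset (ℕ × ℕ) :=
  (valleyPts ν 0 0).toFinset ∪ (if ν.head? = some Step.N then {((0 : ℕ), (0 : ℕ))} else ∅) ∪
    (if ν.getLast? = some Step.E then {(eLen ν, nLen ν)} else ∅)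

/-- `horizNu ν x y`: maximal number of east steps that can be placed starting at `(x,y)`
before crossing `ν` (staying within the bounding rectangle). -/
def horizNu (ν : List Step) (x y : ℕ) : ℕ :=
  ((Finset.Icc 1 (eLen ν - x)).filter (fun k => lowH ν (x + k) ≤ y)).card

/-- No `N` step of the given path (started at `(x,y)`) has initial point with
`horizNu`-value `h`. -/
def noNAt (ν : List Step) (h : ℕ) : List Step → ℕ → ℕ → Prop
  | [], _, _ => True
  | Step.N :: p, x, y => horizNu ν x y ≠ h ∧ noNAt ν h p x (y+1)
  | Step.E :: p, x, y => noNAt ν h p (x+1) y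
  | Step.D :: p, x, y => noNAt ν h p (x+1) (y+1)

/-- Right contraction: replace a consecutive `EN` pair (a valley) by a `D` step. -/
def RightC (μ lam : List Step) : Prop :=
  ∃ p q, μ = p ++ Step.E :: Step.N :: q ∧ lam = p ++ Step.D :: q

/-- Left contraction: delete an `E` step together with the most recent preceding `N` step
whose initial point has the same `horizNu` statistic as the initial point of the `E` step,
shift the intermediate subpath, and place a `D` step at the initial point of the `N` step. -/
def LeftC (ν μ lam : List Step) : Prop :=
  ∃ p m q, μ = p ++ Step.N :: (m ++ Step.E :: q) ∧ lam = p ++ Step.D :: (m ++ q) ∧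
    horizNu ν (eLen p) (nLen p)
      = horizNu ν (eLen (p ++ Step.N :: m)) (nLen (p ++ Step.N :: m)) ∧
    noNAt ν (horizNu ν (eLen (p ++ Step.N :: m)) (nLen (p ++ Step.N :: m)))
      m (eLen p) (nLen p + 1)

/-- Diagonal contraction: delete an `E` step ending at the initial point `r` of a `D` step,
together with the most recent preceding `N` step whose initial point `s` satisfies
`horizNu s = horizNu r`, shift the intermediate subpath, and place a `D` step at `s`. -/
def DiagC (ν μ lam : List Step) : Prop :=
  ∃ p m q, μ = p ++ Step.N :: (m ++ Step.E :: Step.D :: q) ∧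
    lam = p ++ Step.D :: (m ++ Step.D :: q) ∧
    horizNu ν (eLen p) (nLen p)
      = horizNu ν (eLen (p ++ Step.N :: m) + 1) (nLen (p ++ Step.N :: m)) ∧
    noNAt ν (horizNu ν (eLen (p ++ Step.N :: m) + 1) (nLen (p ++ Step.N :: m)))
      m (eLen p) (nLen p + 1)

/-- Cover relation of the contraction poset of ν-Schröder paths. -/
def Covers (ν μ lam : List Step) : Prop :=
  IsSmallSchroder ν μ ∧ IsSmallSchroder ν lam ∧
    (RightC μ lam ∨ LeftC ν μ lam ∨ DiagC ν μ lam)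

/-- The Morse matching: `σ` (having a `D` step preceded by no valley) is matched with the
path `π` obtained by replacing the first such `D` step by `EN`. -/
def MorseM (ν : List Step) : Set (List Step × List Step) :=
  { z | ∃ p q, Step.D ∉ p ∧ valleys p = 0 ∧
      z.2 = p ++ Step.D :: q ∧ z.1 = p ++ Step.E :: Step.N :: q ∧ IsSmallSchroder ν z.2 }

/-- Twice the area between a small ν-Schröder path and `ν`. -/
def area2 (ν π : List Step) : ℕ :=
  ∑ x ∈ Finset.range (eLen ν), (colVal π x - colVal ν x)

/-- An `(I,J̄)`-forest: increasing, non-crossing arcs. -/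
def IsIJForest (I J : Finset ℕ) (F : Finset (ℕ × ℕ)) : Prop :=
  (∀ a ∈ F, a.1 ∈ I ∧ a.2 ∈ J ∧ a.1 < a.2) ∧
    (∀ a ∈ F, ∀ a' ∈ F, ¬(a.1 < a'.1 ∧ a'.1 < a.2 ∧ a.2 < a'.2))

/-- A covering `(I,J̄)`-forest: contains the arc `(1,n)` and has no isolated node. -/
def IsCoveringForest (n : ℕ) (I J : Finset ℕ) (F : Finset (ℕ × ℕ)) : Prop :=
  IsIJForest I J F ∧ (1, n) ∈ F ∧
    (∀ i ∈ I, ∃ a ∈ F, a.1 = i) ∧ (∀ j ∈ J, ∃ a ∈ F, a.2 = j)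

/-- The lattice path read off from the interleaving of `I` and `J̄` (elements `2,…,n-1`,
`E` for elements of `I`, `N` for the others). -/
def nuOf (n : ℕ) (I : Finset ℕ) : List Step :=
  (List.range' 2 (n - 2)).map (fun k => if k ∈ I then Step.E else Step.N)

/-! ### Auxiliary development for the Lalanne–Kreweras style bijection -/

namespace LKaux

instance : Fintype Step where
  elems := {Step.N, Step.E, Step.D}
  complete := by intro x; cases x <;> simp

@[simp] lemma eLen_nil : eLen [] = 0 := rfl
@[simp] lemma nLen_nil : nLen [] = 0 := rfl
@[simp] lemma eLen_cons_N (p : List Step) : eLen (Step.N :: p) = eLen p := by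
  simp [eLen, List.count_cons] <;> omega
@[simp] lemma eLen_cons_E (p : List Step) : eLen (Step.E :: p) = eLen p + 1 := by
  simp [eLen, List.count_cons] <;> omega
@[simp] lemma eLen_cons_D (p : List Step) : eLen (Step.D :: p) = eLen p + 1 := by
  simp [eLen, List.count_cons] <;> omega
@[simp] lemma nLen_cons_N (p : List Step) : nLen (Step.N :: p) = nLen p + 1 := by
  simp [nLen, List.count_cons] <;> omega
@[simp] lemma nLen_cons_E (p : List Step) : nLen (Step.E :: p) = nLen p := by
  simp [nLen, List.count_cons] <;> omega
@[simp] lemma nLen_cons_D (p : List Step) : nLen (Step.D :: p) = nLen p + 1 := by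
  simp [nLen, List.count_cons] <;> omega
@[simp] lemma eLen_append (p q : List Step) : eLen (p ++ q) = eLen p + eLen q := by
  simp [eLen, List.count_append]; omega
@[simp] lemma nLen_append (p q : List Step) : nLen (p ++ q) = nLen p + nLen q := by
  simp [nLen, List.count_append]; omega
@[simp] lemma eLen_repN (c : ℕ) : eLen (List.replicate c Step.N) = 0 := by
  simp [eLen, List.count_replicate]
@[simp] lemma nLen_repN (c : ℕ) : nLen (List.replicate c Step.N) = c := by
  simp [nLen, List.count_replicate]

lemma length_eq (p : List Step) (hD : Step.D ∉ p) : p.length = nLen p + eLen p := by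
  induction p with
  | nil => simp
  | cons s p ih =>
    have hD' : Step.D ∉ p := fun h => hD (List.mem_cons_of_mem _ h)
    have := ih hD'
    cases s with
    | N => simp only [nLen_cons_N, eLen_cons_N, List.length_cons]; omega
    | E => simp only [nLen_cons_E, eLen_cons_E, List.length_cons]; omega
    | D => simp at hD

@[simp] lemma colVal_nil (x : ℕ) : colVal [] x = 0 := rfl
@[simp] lemma colVal_N (p : List Step) (x : ℕ) : colVal (Step.N :: p) x = colVal p x + 2 := rfl
@[simp] lemma colVal_E0 (p : List Step) : colVal (Step.E :: p) 0 = 0 := rfl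
@[simp] lemma colVal_Es (p : List Step) (x : ℕ) : colVal (Step.E :: p) (x+1) = colVal p x := rfl
@[simp] lemma colVal_D0 (p : List Step) : colVal (Step.D :: p) 0 = 1 := rfl
@[simp] lemma colVal_Ds (p : List Step) (x : ℕ) : colVal (Step.D :: p) (x+1) = colVal p x + 2 := rfl

@[simp] lemma lowH_zero (p : List Step) : lowH p 0 = 0 := by
  cases p with
  | nil => rfl
  | cons s t => cases s <;> rfl
@[simp] lemma lowH_nil (x : ℕ) : lowH [] x = 0 := by cases x <;> rfl
@[simp] lemma lowH_N (p : List Step) (x : ℕ) : lowH (Step.N :: p) (x+1) = lowH p (x+1) + 1 := rfl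
@[simp] lemma lowH_E (p : List Step) (x : ℕ) : lowH (Step.E :: p) (x+1) = lowH p x := rfl
@[simp] lemma lowH_D (p : List Step) (x : ℕ) : lowH (Step.D :: p) (x+1) = lowH p x + 1 := rfl

lemma lowH_succ_ge (ν : List Step) : ∀ x, lowH ν x ≤ lowH ν (x+1) := by
  induction ν with
  | nil => simp
  | cons s p ih =>
    intro x
    cases x with
    | zero => simp
    | succ x =>
      cases s with
      | N => simp only [lowH_N]; exact Nat.add_le_add_right (ih (x+1)) 1
      | E => simp only [lowH_E]; exact ih x
      | D => simp only [lowH_D]; exact Nat.add_le_add_right (ih x) 1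

lemma lowH_mono (ν : List Step) {x y : ℕ} (h : x ≤ y) : lowH ν x ≤ lowH ν y := by
  induction y with
  | zero =>
    have hx : x = 0 := by omega
    subst hx; exact le_rfl
  | succ y ih =>
    rcases Nat.lt_or_ge x (y+1) with h' | h'
    · exact le_trans (ih (by omega)) (lowH_succ_ge ν y)
    · have hxy : x = y + 1 := by omega
      subst hxy; exact le_rfl

lemma lowH_le_nLen (ν : List Step) : ∀ x, lowH ν x ≤ nLen ν := by
  induction ν with
  | nil => simp
  | cons s p ih =>
    intro x
    cases x with
    | zero => simp
    | succ x =>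
      cases s with
      | N => simp only [lowH_N, nLen_cons_N]; exact Nat.add_le_add_right (ih (x+1)) 1
      | E => simp only [lowH_E, nLen_cons_E]; exact ih x
      | D => simp only [lowH_D, nLen_cons_D]; exact Nat.add_le_add_right (ih x) 1

lemma colVal_eq_lowH (ν : List Step) (hD : Step.D ∉ ν) : ∀ x, colVal ν x = 2 * lowH ν (x+1) := by
  induction ν with
  | nil => simp
  | cons s p ih =>
    have hD' : Step.D ∉ p := fun h => hD (List.mem_cons_of_mem _ h)
    intro x
    cases s with
    | N => simp only [colVal_N, lowH_N, ih hD' x]; ring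
    | E => cases x with
      | zero => simp
      | succ x => simp [ih hD' x]
    | D => simp at hD

lemma colVal_append (p q : List Step) : ∀ t, colVal (p ++ q) t =
    if t < eLen p then colVal p t else colVal q (t - eLen p) + 2 * nLen p := by
  induction p with
  | nil => intro t; simp
  | cons s p ih =>
    intro t
    cases s with
    | N =>
      simp only [List.cons_append, colVal_N, ih t, eLen_cons_N, nLen_cons_N]
      split <;> omega
    | E =>
      cases t with
      | zero => simp
      | succ t =>
        simp only [List.cons_append, colVal_Es, ih t, eLen_cons_E, nLen_cons_E,
          Nat.succ_sub_succ]
        split <;> split <;> omega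
    | D =>
      cases t with
      | zero => simp
      | succ t =>
        simp only [List.cons_append, colVal_Ds, ih t, eLen_cons_D, nLen_cons_D,
          Nat.succ_sub_succ]
        split <;> split <;> omega

lemma colVal_repN (c : ℕ) (w : List Step) (t : ℕ) :
    colVal (List.replicate c Step.N ++ w) t = colVal w t + 2 * c := by
  induction c with
  | zero => simp
  | succ c ih => simp [List.replicate_succ, ih]; ring

lemma colVal_repN' (c : ℕ) (t : ℕ) : colVal (List.replicate c Step.N) t = 2 * c := by
  have := colVal_repN c [] t
  simpa using this

lemma colVal_large (p : List Step) (t : ℕ) (h : eLen p ≤ t) : colVal p t = 2 * nLen p := by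
  have h2 := colVal_append p [] t
  rw [List.append_nil] at h2
  rw [h2, if_neg (by omega)]
  simp

end LKaux

namespace LKaux

@[simp] lemma valleyPts_nil (x y : ℕ) : valleyPts [] x y = [] := rfl
@[simp] lemma valleyPts_N (p : List Step) (x y : ℕ) :
    valleyPts (Step.N :: p) x y = valleyPts p x (y+1) := rfl
@[simp] lemma valleyPts_E (p : List Step) (x y : ℕ) :
    valleyPts (Step.E :: p) x y =
      (if p.head? = some Step.N then [(x+1, y)] else []) ++ valleyPts p (x+1) y := rfl
@[simp] lemma valleyPts_D (p : List Step) (x y : ℕ) :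
    valleyPts (Step.D :: p) x y = valleyPts p (x+1) (y+1) := rfl

lemma valleyPts_bounds (p : List Step) : ∀ x y, ∀ q ∈ valleyPts p x y,
    x < q.1 ∧ q.1 ≤ x + eLen p ∧ y ≤ q.2 ∧ q.2 < y + nLen p := by
  induction p with
  | nil => intro x y q hq; simp at hq
  | cons s p ih =>
    intro x y q hq
    cases s with
    | N =>
      simp only [valleyPts_N] at hq
      have := ih x (y+1) q hq
      simp only [eLen_cons_N, nLen_cons_N]
      omega
    | E =>
      simp only [valleyPts_E, List.mem_append] at hq
      rcases hq with hq | hq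
      · rcases Classical.em (p.head? = some Step.N) with h | h
        · rw [if_pos h] at hq
          simp only [List.mem_singleton] at hq
          subst hq
          have hp1 : 1 ≤ nLen p := by
            cases p with
            | nil => simp at h
            | cons t p' =>
              cases t <;> simp at h ⊢ <;> omega
          simp only [eLen_cons_E, nLen_cons_E]
          omega
        · rw [if_neg h] at hq; simp at hq
      · have := ih (x+1) y q hq
        simp only [eLen_cons_E, nLen_cons_E]
        omega
    | D =>
      simp only [valleyPts_D] at hq
      have := ih (x+1) (y+1) q hq
      simp only [eLen_cons_D, nLen_cons_D]
      omega

lemma valleyPts_chain (p : List Step) : ∀ x y,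
    List.Chain' (fun s t : ℕ × ℕ => s.1 < t.1 ∧ s.2 < t.2) (valleyPts p x y) := by
  induction p with
  | nil => intro x y; exact List.isChain_nil
  | cons s p ih =>
    intro x y
    cases s with
    | N => simpa using ih x (y+1)
    | E =>
      rcases Classical.em (p.head? = some Step.N) with h | h
      · simp only [valleyPts_E, if_pos h, List.singleton_append]
        refine List.isChain_cons.mpr ?_
        constructor
        · intro q hq
          have hq' : q ∈ valleyPts p (x+1) y := List.mem_of_mem_head? hq
          have hb := valleyPts_bounds p (x+1) y q hq'
          obtain ⟨p', rfl⟩ : ∃ p', p = Step.N :: p' := by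
            cases p with
            | nil => simp at h
            | cons t p' =>
              cases t <;> simp at h ⊢
          simp only [valleyPts_N] at hq'
          have hb2 := valleyPts_bounds p' (x+1) (y+1) q hq'
          exact ⟨by omega, by omega⟩
        · exact ih (x+1) y
      · simpa [valleyPts_E, if_neg h] using ih (x+1) y
    | D => simpa using ih (x+1) (y+1)

lemma valleys_cons (s : Step) (p : List Step) :
    valleys (s :: p) = valleys p +
      (if s = Step.E ∧ p.head? = some Step.N then 1 else 0) := by
  cases p with
  | nil => cases s <;> simp [valleys]
  | cons t p' =>
    have hz : (s :: t :: p').zip (s :: t :: p').tail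
        = (s, t) :: ((t :: p').zip (t :: p').tail) := by
      simp [List.zip_cons_cons]
    unfold valleys
    rw [hz, List.count_cons]
    cases s <;> cases t <;> simp

lemma valleys_eq (p : List Step) : ∀ x y, valleys p = (valleyPts p x y).length := by
  induction p with
  | nil => intro x y; rfl
  | cons s p ih =>
    intro x y
    rw [valleys_cons]
    cases s with
    | N => simp only [valleyPts_N, ← ih x (y+1)]; simp
    | E =>
      simp only [valleyPts_E, List.length_append, ← ih (x+1) y]
      rcases Classical.em (p.head? = some Step.N) with h | h
      · simp [h]; omega
      · simp [h]
    | D => simp only [valleyPts_D, ← ih (x+1) (y+1)]; simp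

lemma colVal_at_valley (p : List Step) (hD : Step.D ∉ p) : ∀ x y, ∀ q ∈ valleyPts p x y,
    colVal p (q.1 - 1 - x) = 2 * (q.2 - y) := by
  induction p with
  | nil => intro x y q hq; simp at hq
  | cons s p ih =>
    have hD' : Step.D ∉ p := fun h => hD (List.mem_cons_of_mem _ h)
    intro x y q hq
    cases s with
    | N =>
      simp only [valleyPts_N] at hq
      have hb := valleyPts_bounds p x (y+1) q hq
      have := ih hD' x (y+1) q hq
      simp only [colVal_N, this]
      omega
    | E =>
      simp only [valleyPts_E, List.mem_append] at hq
      rcases hq with hq | hq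
      · rcases Classical.em (p.head? = some Step.N) with h | h
        · rw [if_pos h] at hq
          simp only [List.mem_singleton] at hq
          subst hq
          simp
        · rw [if_neg h] at hq; simp at hq
      · have hb := valleyPts_bounds p (x+1) y q hq
        have h1 : q.1 - 1 - x = (q.1 - 1 - (x+1)) + 1 := by omega
        rw [h1, colVal_Es]
        exact ih hD' (x+1) y q hq
    | D => simp at hD

lemma valleyPts_head_of_not_N (p : List Step) (hD : Step.D ∉ p)
    (hh : p.head? ≠ some Step.N) : ∀ x y,
    (valleyPts p x y = [] ∧ nLen p = 0) ∨ ∃ u T, valleyPts p x y = (u, y) :: T := by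
  induction p with
  | nil => intro x y; left; simp
  | cons s p ih =>
    have hD' : Step.D ∉ p := fun h => hD (List.mem_cons_of_mem _ h)
    intro x y
    cases s with
    | N => simp at hh
    | E =>
      rcases Classical.em (p.head? = some Step.N) with h | h
      · right; exact ⟨x+1, valleyPts p (x+1) y, by simp [h]⟩
      · rcases ih hD' h (x+1) y with ⟨h1, h2⟩ | ⟨u, T, hT⟩
        · left; simp [h, h1, h2]
        · right; exact ⟨u, T, by simp [h, hT]⟩
    | D => simp at hD

lemma valleyPts_inj : ∀ (p p' : List Step), Step.D ∉ p → Step.D ∉ p' →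
    eLen p = eLen p' → nLen p = nLen p' → ∀ x y,
    valleyPts p x y = valleyPts p' x y → p = p' := by
  intro p
  induction p with
  | nil =>
    intro p' _ hD' he hn x y _
    cases p' with
    | nil => rfl
    | cons s r =>
      have := length_eq (s :: r) hD'
      simp at he hn
      simp [← he, ← hn] at this
  | cons s r ih =>
    intro p' hD hD' he hn x y hv
    have hDr : Step.D ∉ r := fun h => hD (List.mem_cons_of_mem _ h)
    cases p' with
    | nil =>
      have := length_eq (s :: r) hD
      simp at he hn
      simp [he, hn] at this
    | cons s' r' =>
      have hDr' : Step.D ∉ r' := fun h => hD' (List.mem_cons_of_mem _ h)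
      cases s with
      | D => simp at hD
      | N =>
        cases s' with
        | D => simp at hD'
        | N =>
          simp only [valleyPts_N] at hv
          simp only [eLen_cons_N] at he
          simp only [nLen_cons_N] at hn
          rw [ih r' hDr hDr' he (by omega) x (y+1) hv]
        | E =>
          exfalso
          simp only [valleyPts_N, valleyPts_E] at hv
          rcases Classical.em (r'.head? = some Step.N) with h | h
          · rw [if_pos h, List.singleton_append] at hv
            have hmem : ((x+1 : ℕ), y) ∈ valleyPts r x (y+1) := by
              rw [hv]; exact List.mem_cons_self
            have := valleyPts_bounds r x (y+1) _ hmem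
            omega
          · rw [if_neg h, List.nil_append] at hv
            rcases valleyPts_head_of_not_N r' hDr' h (x+1) y with ⟨h1, h2⟩ | ⟨u, T, hT⟩
            · simp only [nLen_cons_N, nLen_cons_E] at hn
              omega
            · have hmem : ((u : ℕ), y) ∈ valleyPts r x (y+1) := by
                rw [hv, hT]; exact List.mem_cons_self
              have := valleyPts_bounds r x (y+1) _ hmem
              omega
      | E =>
        cases s' with
        | D => simp at hD'
        | N =>
          exfalso
          simp only [valleyPts_N, valleyPts_E] at hv
          rcases Classical.em (r.head? = some Step.N) with h | h
          · rw [if_pos h, List.singleton_append] at hv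
            have hmem : ((x+1 : ℕ), y) ∈ valleyPts r' x (y+1) := by
              rw [← hv]; exact List.mem_cons_self
            have := valleyPts_bounds r' x (y+1) _ hmem
            omega
          · rw [if_neg h, List.nil_append] at hv
            rcases valleyPts_head_of_not_N r hDr h (x+1) y with ⟨h1, h2⟩ | ⟨u, T, hT⟩
            · simp only [nLen_cons_N, nLen_cons_E] at hn
              omega
            · have hmem : ((u : ℕ), y) ∈ valleyPts r' x (y+1) := by
                rw [← hv, hT]; exact List.mem_cons_self
              have := valleyPts_bounds r' x (y+1) _ hmem
              omega
        | E =>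
          simp only [eLen_cons_E] at he
          simp only [nLen_cons_E] at hn
          simp only [valleyPts_E] at hv
          rcases Classical.em (r.head? = some Step.N) with h | h <;>
            rcases Classical.em (r'.head? = some Step.N) with h' | h'
          · rw [if_pos h, if_pos h', List.singleton_append, List.singleton_append] at hv
            have hv' : valleyPts r (x+1) y = valleyPts r' (x+1) y := by
              simpa using hv
            rw [ih r' hDr hDr' (by omega) hn (x+1) y hv']
          · exfalso
            rw [if_pos h, if_neg h', List.singleton_append, List.nil_append] at hv
            have hmem : ((x+1 : ℕ), y) ∈ valleyPts r' (x+1) y := by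
              rw [← hv]; exact List.mem_cons_self
            have := valleyPts_bounds r' (x+1) y _ hmem
            omega
          · exfalso
            rw [if_neg h, if_pos h', List.nil_append, List.singleton_append] at hv
            have hmem : ((x+1 : ℕ), y) ∈ valleyPts r (x+1) y := by
              rw [hv]; exact List.mem_cons_self
            have := valleyPts_bounds r (x+1) y _ hmem
            omega
          · rw [if_neg h, if_neg h', List.nil_append, List.nil_append] at hv
            rw [ih r' hDr hDr' (by omega) hn (x+1) y hv]

end LKaux

namespace LKaux

@[simp] lemma hp_nil (ν : List Step) (x y : ℕ) : highPeakPts ν [] x y = [] := rfl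
@[simp] lemma hp_N (ν p : List Step) (x y : ℕ) :
    highPeakPts ν (Step.N :: p) x y =
      (if p.head? = some Step.E ∧ colVal ν x < 2*(y+1) then [(x, y+1)] else []) ++
        highPeakPts ν p x (y+1) := rfl
@[simp] lemma hp_E (ν p : List Step) (x y : ℕ) :
    highPeakPts ν (Step.E :: p) x y = highPeakPts ν p (x+1) y := rfl
@[simp] lemma hp_D (ν p : List Step) (x y : ℕ) :
    highPeakPts ν (Step.D :: p) x y = highPeakPts ν p (x+1) (y+1) := rfl

lemma head?_replicate_append (c : ℕ) (w : List Step) :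
    (List.replicate c Step.N ++ w).head? = if c = 0 then w.head? else some Step.N := by
  cases c with
  | zero => simp
  | succ c => simp [List.replicate_succ]

lemma highPeakPts_repN (ν : List Step) (c : ℕ) (w : List Step) : ∀ x y,
    highPeakPts ν (List.replicate c Step.N ++ w) x y =
      (if c ≠ 0 ∧ w.head? = some Step.E ∧ colVal ν x < 2*(y+c) then [(x, y+c)] else []) ++
        highPeakPts ν w x (y+c) := by
  induction c with
  | zero => intro x y; simp
  | succ c ih =>
    intro x y
    rw [List.replicate_succ, List.cons_append, hp_N, ih x (y+1), head?_replicate_append]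
    have e : y + 1 + c = y + (c+1) := by omega
    rw [e]
    by_cases hc : c = 0
    · subst hc; simp
    · simp [hc]

def lowSeg (ν : List Step) : ℕ → ℕ → ℕ → List Step
  | _, _, 0 => []
  | x, y, d+1 =>
      List.replicate (max y (lowH ν (x+1)) - y) Step.N ++
        Step.E :: lowSeg ν (x+1) (max y (lowH ν (x+1))) d

@[simp] lemma lowSeg_zero (ν : List Step) (x y : ℕ) : lowSeg ν x y 0 = [] := rfl

lemma lowSeg_succ (ν : List Step) (x y d : ℕ) :
    lowSeg ν x y (d+1) = List.replicate (max y (lowH ν (x+1)) - y) Step.N ++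
      Step.E :: lowSeg ν (x+1) (max y (lowH ν (x+1))) d := rfl

lemma lowSeg_noD (ν : List Step) (d : ℕ) : ∀ x y, Step.D ∉ lowSeg ν x y d := by
  induction d with
  | zero => intro x y; simp
  | succ d ih =>
    intro x y
    rw [lowSeg_succ]
    intro hmem
    rcases List.mem_append.1 hmem with h | h
    · have := List.eq_of_mem_replicate h; simp at this
    · rcases List.mem_cons.1 h with h | h
      · simp at h
      · exact ih (x+1) _ h

lemma lowSeg_eLen (ν : List Step) (d : ℕ) : ∀ x y, eLen (lowSeg ν x y d) = d := by
  induction d with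
  | zero => intro x y; simp
  | succ d ih => intro x y; rw [lowSeg_succ]; simp [ih]

lemma lowSeg_nLen (ν : List Step) (d : ℕ) : ∀ x y, lowH ν x ≤ y →
    nLen (lowSeg ν x y d) = max y (lowH ν (x + d)) - y := by
  induction d with
  | zero =>
    intro x y h
    have e : x + 0 = x := rfl
    rw [e]
    simp only [lowSeg_zero, nLen_nil]
    omega
  | succ d ih =>
    intro x y h
    rw [lowSeg_succ]
    simp only [nLen_append, nLen_repN, nLen_cons_E]
    rw [ih (x+1) _ (le_max_right _ _)]
    have e : x + 1 + d = x + (d+1) := by omega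
    rw [e]
    have h2 := lowH_mono ν (show x+1 ≤ x + (d+1) by omega)
    omega

lemma lowSeg_colVal (ν : List Step) (d : ℕ) : ∀ x y, lowH ν x ≤ y → ∀ w t,
    colVal (lowSeg ν x y d ++ w) t =
      if t < d then 2 * (max y (lowH ν (x + t + 1)) - y)
      else colVal w (t - d) + 2 * (max y (lowH ν (x + d)) - y) := by
  induction d with
  | zero =>
    intro x y h w t
    rw [if_neg (by omega)]
    have e : x + 0 = x := rfl
    rw [e]
    have hmax : max y (lowH ν x) = y := by omega
    rw [hmax]
    simp
  | succ d ih =>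
    intro x y h w t
    rw [lowSeg_succ, List.append_assoc, List.cons_append, colVal_repN]
    cases t with
    | zero =>
      rw [if_pos (by omega), colVal_E0]
      have e : x + 0 + 1 = x + 1 := by omega
      rw [e]
      omega
    | succ t =>
      rw [colVal_Es, ih (x+1) _ (le_max_right _ _) w t]
      have e1 : x + 1 + t + 1 = x + (t+1) + 1 := by omega
      have e2 : x + 1 + d = x + (d+1) := by omega
      rw [e1, e2]
      have e3 : t + 1 - (d+1) = t - d := by omega
      rw [e3]
      have hm2 := lowH_mono ν (show x+1 ≤ x+(t+1)+1 by omega)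
      have hm3 := lowH_mono ν (show x+1 ≤ x+(d+1) by omega)
      split_ifs with h1 h2 h3 <;> omega

lemma highPeakPts_repN_nil (ν : List Step) (c x y : ℕ) :
    highPeakPts ν (List.replicate c Step.N) x y = [] := by
  rw [← List.append_nil (List.replicate c Step.N), highPeakPts_repN]
  simp

lemma lowSeg_highPeakPts (ν : List Step) (hD : Step.D ∉ ν) (d : ℕ) : ∀ x y, lowH ν x ≤ y → ∀ w,
    highPeakPts ν (lowSeg ν x y d ++ w) x y =
      highPeakPts ν w (x+d) (max y (lowH ν (x+d))) := by
  induction d with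
  | zero =>
    intro x y h w
    have e : x + 0 = x := rfl
    rw [e]
    have hmax : max y (lowH ν x) = y := by omega
    rw [hmax]
    simp
  | succ d ih =>
    intro x y h w
    rw [lowSeg_succ, List.append_assoc, List.cons_append, highPeakPts_repN]
    have hym : y + (max y (lowH ν (x+1)) - y) = max y (lowH ν (x+1)) := by omega
    rw [hym]
    have hcv : colVal ν x = 2 * lowH ν (x+1) := colVal_eq_lowH ν hD x
    rw [if_neg (by rintro ⟨h1, -, h3⟩; omega), List.nil_append, hp_E,
      ih (x+1) _ (le_max_right _ _) w]
    have e2 : x + 1 + d = x + (d+1) := by omega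
    rw [e2]
    have hm3 := lowH_mono ν (show x+1 ≤ x + (d+1) by omega)
    have hmm : max (max y (lowH ν (x+1))) (lowH ν (x + (d+1))) = max y (lowH ν (x + (d+1))) := by
      omega
    rw [hmm]

def pathOfH (ν : List Step) : List (ℕ × ℕ) → ℕ → ℕ → List Step
  | [], x, y =>
      lowSeg ν x y (eLen ν - x) ++
        List.replicate (nLen ν - max y (lowH ν (eLen ν))) Step.N
  | (p, q) :: H, x, y =>
      lowSeg ν x y (p - x) ++
        (List.replicate (q - max y (lowH ν p)) Step.N ++
          Step.E :: pathOfH ν H (p+1) q)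

lemma pathOfH_nil (ν : List Step) (x y : ℕ) : pathOfH ν [] x y =
    lowSeg ν x y (eLen ν - x) ++
      List.replicate (nLen ν - max y (lowH ν (eLen ν))) Step.N := rfl

lemma pathOfH_cons (ν : List Step) (p q : ℕ) (H : List (ℕ × ℕ)) (x y : ℕ) :
    pathOfH ν ((p, q) :: H) x y =
      lowSeg ν x y (p - x) ++
        (List.replicate (q - max y (lowH ν p)) Step.N ++
          Step.E :: pathOfH ν H (p+1) q) := rfl

theorem pathOfH_spec (ν : List Step) (hD : Step.D ∉ ν) : ∀ (H : List (ℕ × ℕ)) (x y : ℕ),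
    lowH ν x ≤ y → x ≤ eLen ν → y ≤ nLen ν →
    (∀ r ∈ H, r.1 < eLen ν ∧ y < r.2 ∧ r.2 ≤ nLen ν ∧ x ≤ r.1 ∧ lowH ν (r.1+1) < r.2) →
    H.Pairwise (fun s t => s.1 < t.1 ∧ s.2 < t.2) →
    Step.D ∉ pathOfH ν H x y ∧
    eLen (pathOfH ν H x y) = eLen ν - x ∧
    nLen (pathOfH ν H x y) = nLen ν - y ∧
    (∀ t, colVal ν (x + t) ≤ colVal (pathOfH ν H x y) t + 2*y) ∧
    highPeakPts ν (pathOfH ν H x y) x y = H := by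
  intro H
  induction H with
  | nil =>
    intro x y hxy hx hy _ _
    have hxe : x + (eLen ν - x) = eLen ν := by omega
    have hMa : lowH ν (eLen ν) ≤ nLen ν := lowH_le_nLen ν (eLen ν)
    refine ⟨?_, ?_, ?_, ?_, ?_⟩
    · rw [pathOfH_nil]
      intro hmem
      rcases List.mem_append.1 hmem with h | h
      · exact lowSeg_noD ν _ x y h
      · have := List.eq_of_mem_replicate h; simp at this
    · rw [pathOfH_nil]; simp [lowSeg_eLen]
    · rw [pathOfH_nil]
      simp only [nLen_append, nLen_repN]
      rw [lowSeg_nLen ν _ x y hxy, hxe]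
      omega
    · intro t
      rw [pathOfH_nil, lowSeg_colVal ν _ x y hxy, hxe]
      have hcv := colVal_eq_lowH ν hD (x+t)
      have hln := lowH_le_nLen ν (x+t+1)
      by_cases ht : t < eLen ν - x
      · rw [if_pos ht]; omega
      · rw [if_neg ht, colVal_repN']; omega
    · rw [pathOfH_nil, lowSeg_highPeakPts ν hD _ x y hxy, hxe, highPeakPts_repN_nil]
  | cons r H ih =>
    obtain ⟨p, q⟩ := r
    intro x y hxy hx hy hall hpw
    obtain ⟨hpb', hyq', hqa', hxp', hLq'⟩ := hall (p, q) (List.mem_cons_self)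
    have hpb : p < eLen ν := hpb'
    have hyq : y < q := hyq'
    have hqa : q ≤ nLen ν := hqa'
    have hxp : x ≤ p := hxp'
    have hLq : lowH ν (p+1) < q := hLq'
    have hLp : lowH ν p ≤ lowH ν (p+1) := lowH_succ_ge ν p
    have hxpe : x + (p - x) = p := by omega
    rw [List.pairwise_cons] at hpw
    obtain ⟨hhead, hpw'⟩ := hpw
    have hall' : ∀ r ∈ H, r.1 < eLen ν ∧ q < r.2 ∧ r.2 ≤ nLen ν ∧ p+1 ≤ r.1 ∧
        lowH ν (r.1+1) < r.2 := by
      intro r hr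
      obtain ⟨h1, h2, h3, h4, h5⟩ := hall r (List.mem_cons_of_mem _ hr)
      obtain ⟨h6, h7⟩ := hhead r hr
      have h6' : p < r.1 := h6
      have h7' : q < r.2 := h7
      exact ⟨h1, h7', h3, by omega, h5⟩
    obtain ⟨ihD, ihE, ihN, ihC, ihH⟩ := ih (p+1) q (by omega) (by omega) (by omega) hall' hpw'
    refine ⟨?_, ?_, ?_, ?_, ?_⟩
    · rw [pathOfH_cons]
      intro hmem
      rcases List.mem_append.1 hmem with h | h
      · exact lowSeg_noD ν _ x y h
      · rcases List.mem_append.1 h with h | h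
        · have := List.eq_of_mem_replicate h; simp at this
        · rcases List.mem_cons.1 h with h | h
          · simp at h
          · exact ihD h
    · rw [pathOfH_cons]
      simp only [eLen_append, lowSeg_eLen, eLen_repN, eLen_cons_E, ihE]
      omega
    · rw [pathOfH_cons]
      simp only [nLen_append, nLen_repN, nLen_cons_E, ihN]
      rw [lowSeg_nLen ν _ x y hxy, hxpe]
      omega
    · intro t
      rw [pathOfH_cons, lowSeg_colVal ν _ x y hxy, hxpe]
      by_cases ht : t < p - x
      · rw [if_pos ht]
        have hcv := colVal_eq_lowH ν hD (x+t)
        omega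
      · rw [if_neg ht, colVal_repN]
        cases hs : t - (p - x) with
        | zero =>
          rw [colVal_E0]
          have hxt : x + t = p := by omega
          rw [hxt, colVal_eq_lowH ν hD p]
          omega
        | succ s =>
          rw [colVal_Es]
          have hxt : x + t = p + 1 + s := by omega
          rw [hxt]
          have := ihC s
          omega
    · rw [pathOfH_cons, lowSeg_highPeakPts ν hD _ x y hxy, hxpe, highPeakPts_repN]
      have hq : max y (lowH ν p) + (q - max y (lowH ν p)) = q := by omega
      rw [hq]
      have hcv := colVal_eq_lowH ν hD p
      rw [if_pos ⟨by omega, rfl, by omega⟩, hp_E, ihH]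
      rfl

end LKaux

namespace LKaux

lemma hp_length (ν : List Step) : ∀ (p : List Step) (x y : ℕ),
    (highPeakPts ν p x y).length ≤ p.length := by
  intro p
  induction p with
  | nil => intro x y; simp
  | cons s p ih =>
    intro x y
    cases s with
    | N =>
      rw [hp_N, List.length_append]
      have := ih x (y+1)
      split <;> simp <;> omega
    | E =>
      rw [hp_E]
      have := ih (x+1) y
      simp
      omega
    | D =>
      rw [hp_D]
      have := ih (x+1) (y+1)
      simp
      omega

theorem theta_spec (ν : List Step) (hDν : Step.D ∉ ν) (π : List Step) (h : IsNuDyck ν π) :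
    IsNuDyck ν (pathOfH ν ((valleyPts π 0 0).map (fun r => (r.1 - 1, r.2 + 1))) 0 0) ∧
    highPeaks ν (pathOfH ν ((valleyPts π 0 0).map (fun r => (r.1 - 1, r.2 + 1))) 0 0)
      = valleys π ∧
    (highPeakPts ν (pathOfH ν ((valleyPts π 0 0).map (fun r => (r.1 - 1, r.2 + 1))) 0 0) 0 0).map
      (fun r => (r.1 + 1, r.2 - 1)) = valleyPts π 0 0 := by
  obtain ⟨hDπ, he, hn, hw⟩ := h
  have hbounds : ∀ r ∈ valleyPts π 0 0, 0 < r.1 ∧ r.1 ≤ eLen π ∧ r.2 < nLen π := by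
    intro r hr
    have := valleyPts_bounds π 0 0 r hr
    omega
  have habove : ∀ r ∈ valleyPts π 0 0, lowH ν r.1 ≤ r.2 := by
    intro r hr
    have hcv := colVal_at_valley π hDπ 0 0 r hr
    simp only [Nat.sub_zero] at hcv
    have hw' := hw (r.1 - 1)
    have hb := hbounds r hr
    have hν' := colVal_eq_lowH ν hDν (r.1 - 1)
    have e : r.1 - 1 + 1 = r.1 := by omega
    rw [e] at hν'
    omega
  have hpairV : (valleyPts π 0 0).Pairwise (fun s t => s.1 < t.1 ∧ s.2 < t.2) := by
    haveI : IsTrans (ℕ × ℕ) (fun s t : ℕ × ℕ => s.1 < t.1 ∧ s.2 < t.2) :=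
      ⟨fun a b c h1 h2 => ⟨lt_trans h1.1 h2.1, lt_trans h1.2 h2.2⟩⟩
    exact List.isChain_iff_pairwise.mp (valleyPts_chain π 0 0)
  have hpairH : ((valleyPts π 0 0).map (fun r => (r.1 - 1, r.2 + 1))).Pairwise
      (fun s t : ℕ × ℕ => s.1 < t.1 ∧ s.2 < t.2) := by
    rw [List.pairwise_map]
    refine List.Pairwise.imp_of_mem ?_ hpairV
    intro a b ha hb hab
    obtain ⟨hab1, hab2⟩ := hab
    have h1 := (hbounds a ha).1
    exact ⟨show a.1 - 1 < b.1 - 1 by omega, show a.2 + 1 < b.2 + 1 by omega⟩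
  have hallH : ∀ r ∈ (valleyPts π 0 0).map (fun r => (r.1 - 1, r.2 + 1)),
      r.1 < eLen ν ∧ 0 < r.2 ∧ r.2 ≤ nLen ν ∧ 0 ≤ r.1 ∧ lowH ν (r.1 + 1) < r.2 := by
    intro r hr
    rcases List.mem_map.1 hr with ⟨s, hs, rfl⟩
    have hb := hbounds s hs
    have ha := habove s hs
    refine ⟨?_, ?_, ?_, Nat.zero_le _, ?_⟩
    · show s.1 - 1 < eLen ν
      omega
    · show 0 < s.2 + 1
      omega
    · show s.2 + 1 ≤ nLen ν
      omega
    · show lowH ν (s.1 - 1 + 1) < s.2 + 1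
      have e : s.1 - 1 + 1 = s.1 := by omega
      rw [e]
      omega
  obtain ⟨sD, sE, sN, sC, sH⟩ := pathOfH_spec ν hDν
    ((valleyPts π 0 0).map (fun r => (r.1 - 1, r.2 + 1))) 0 0
    (by simp) (Nat.zero_le _) (Nat.zero_le _) hallH hpairH
  refine ⟨⟨sD, by omega, by omega, ?_⟩, ?_, ?_⟩
  · intro t
    have := sC t
    simpa using this
  · show (highPeakPts ν _ 0 0).length = valleys π
    rw [sH, List.length_map]
    exact (valleys_eq π 0 0).symm
  · rw [sH, List.map_map]
    have hcongr : ∀ a ∈ valleyPts π 0 0,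
        ((fun r : ℕ × ℕ => (r.1 + 1, r.2 - 1)) ∘ (fun r : ℕ × ℕ => (r.1 - 1, r.2 + 1))) a
          = id a := by
      intro a ha
      have hb := hbounds a ha
      rcases a with ⟨a1, a2⟩
      simp only [Function.comp_apply, id_eq, Prod.mk.injEq]
      simp only [Prod.fst] at hb
      constructor <;> omega
    rw [List.map_congr_left hcongr, List.map_id]

end LKaux

/-- For a lattice path ν beginning with a north step and ending with an east
step, the number of ν-Dyck paths with exactly `i` valleys equals the number of ν-Dyck paths
with exactly `i` high peaks. -/
theorem card_valleys_eq_card_highPeaks (ν : List Step) (hν : IsLatticePath ν)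
    (hhead : ν.head? = some Step.N) (hlast : ν.getLast? = some Step.E) (i : ℕ) :
    Nat.card {π : List Step // IsNuDyck ν π ∧ valleys π = i}
      = Nat.card {π : List Step // IsNuDyck ν π ∧ highPeaks ν π = i} := by
  classical
  open LKaux in
  have hDν : Step.D ∉ ν := hν
  have hfin : {π : List Step | IsNuDyck ν π}.Finite := by
    apply Set.Finite.subset (List.finite_length_eq Step (nLen ν + eLen ν))
    intro π hπ
    obtain ⟨hD, he, hn, -⟩ := hπ
    have := LKaux.length_eq π hD
    simp only [Set.mem_setOf_eq]
    omega
  set F : Finset (List Step) := hfin.toFinset with hFdef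
  have hmemF : ∀ π, π ∈ F ↔ IsNuDyck ν π := fun π => by
    simp [hFdef, Set.Finite.mem_toFinset]
  set M : ℕ := nLen ν + eLen ν + 1 with hMdef
  have hvb : ∀ π ∈ F, valleys π < M := by
    intro π hπ
    obtain ⟨hD, he, hn, -⟩ := (hmemF π).1 hπ
    have hlen := LKaux.length_eq π hD
    have h1 : valleys π ≤ (π.zip π.tail).length := List.count_le_length
    have h2 : (π.zip π.tail).length ≤ π.length := by
      rw [List.length_zip]
      omega
    omega
  have hpkb : ∀ π ∈ F, highPeaks ν π < M := by
    intro π hπ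
    obtain ⟨hD, he, hn, -⟩ := (hmemF π).1 hπ
    have hlen := LKaux.length_eq π hD
    have h1 : (highPeakPts ν π 0 0).length ≤ π.length := LKaux.hp_length ν π 0 0
    have h2 : highPeaks ν π = (highPeakPts ν π 0 0).length := rfl
    omega
  have cardA : ∀ j : ℕ, Nat.card {π : List Step // IsNuDyck ν π ∧ valleys π = j}
      = (F.filter (fun π => valleys π = j)).card := by
    intro j
    rw [← Nat.card_eq_finsetCard]
    exact Nat.card_congr (Equiv.subtypeEquivRight (fun π => by
      simp only [Finset.mem_filter, hmemF] <;> tauto))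
  have cardB : ∀ j : ℕ, Nat.card {π : List Step // IsNuDyck ν π ∧ highPeaks ν π = j}
      = (F.filter (fun π => highPeaks ν π = j)).card := by
    intro j
    rw [← Nat.card_eq_finsetCard]
    exact Nat.card_congr (Equiv.subtypeEquivRight (fun π => by
      simp only [Finset.mem_filter, hmemF] <;> tauto))
  have hinj : ∀ j : ℕ, (F.filter (fun π => valleys π = j)).card
      ≤ (F.filter (fun π => highPeaks ν π = j)).card := by
    intro j
    apply Finset.card_le_card_of_injOn
      (fun π => LKaux.pathOfH ν ((valleyPts π 0 0).map (fun r => (r.1 - 1, r.2 + 1))) 0 0)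
    · intro π hπ
      rw [Finset.mem_coe, Finset.mem_filter] at hπ ⊢
      obtain ⟨hπF, hval⟩ := hπ
      obtain ⟨hdyck, hhp, -⟩ := LKaux.theta_spec ν hDν π ((hmemF π).1 hπF)
      exact ⟨(hmemF _).2 hdyck, by rw [hhp, hval]⟩
    · intro π1 h1 π2 h2 heq
      have d1 := (hmemF π1).1 (Finset.mem_filter.1 (Finset.mem_coe.1 h1)).1
      have d2 := (hmemF π2).1 (Finset.mem_filter.1 (Finset.mem_coe.1 h2)).1
      obtain ⟨-, -, hrec1⟩ := LKaux.theta_spec ν hDν π1 d1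
      obtain ⟨-, -, hrec2⟩ := LKaux.theta_spec ν hDν π2 d2
      have heq' : LKaux.pathOfH ν ((valleyPts π1 0 0).map (fun r => (r.1 - 1, r.2 + 1))) 0 0
          = LKaux.pathOfH ν ((valleyPts π2 0 0).map (fun r => (r.1 - 1, r.2 + 1))) 0 0 := heq
      have hVeq : valleyPts π1 0 0 = valleyPts π2 0 0 := by
        rw [← hrec1, ← hrec2, heq']
      exact LKaux.valleyPts_inj π1 π2 d1.1 d2.1 (by rw [d1.2.1, d2.2.1])
        (by rw [d1.2.2.1, d2.2.2.1]) 0 0 hVeq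
  have hsum1 : F.card = ∑ j ∈ Finset.range M, (F.filter (fun π => valleys π = j)).card :=
    Finset.card_eq_sum_card_fiberwise (fun π hπ => Finset.mem_range.2 (hvb π hπ))
  have hsum2 : F.card
      = ∑ j ∈ Finset.range M, (F.filter (fun π => highPeaks ν π = j)).card :=
    Finset.card_eq_sum_card_fiberwise (fun π hπ => Finset.mem_range.2 (hpkb π hπ))
  have key : ∀ j ∈ Finset.range M, (F.filter (fun π => valleys π = j)).card
      = (F.filter (fun π => highPeaks ν π = j)).card :=
    (Finset.sum_eq_sum_iff_of_le (fun j _ => hinj j)).1 (hsum1.symm.trans hsum2)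
  rw [cardA i, cardB i]
  by_cases hi : i < M
  · exact key i (Finset.mem_range.2 hi)
  · have h1 : F.filter (fun π => valleys π = i) = ∅ := by
      rw [Finset.filter_eq_empty_iff]
      intro π hπ
      have := hvb π hπ
      omega
    have h2 : F.filter (fun π => highPeaks ν π = i) = ∅ := by
      rw [Finset.filter_eq_empty_iff]
      intro π hπ
      have := hpkb π hπ
      omega
    rw [h1, h2]
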